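/- For every instance of the restart rule (■_L^2) of LNS_Kt, i.e., with conclusion G ⇗ Γ ⇒ Δ ↗ Σ,■A ⇒ Π and premiss G ⇗ Γ,A ⇒ Δ (where G is a possibly empty context and ⇗ stands for either ↗ or ↙): if the conclusion is falsifiable, then the premiss is falsifiable. -/

import Mathlib

/-- Formulae of tense logic: atoms (indexed by naturals), ⊥, →, □, ◇, ■, ◆. -/
inductive Formula : Type
  | atom : ℕ → Formula
  | bot : Formula
  | imp : Formula → Formula → Formula
  | box : Formula → Formula
  | dia : Formula → Formula
  | bbox : Formula → Formula
  | bdia : Formula → Formula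

def Formula.neg (A : Formula) : Formula := A.imp .bot
def Formula.and (A B : Formula) : Formula := (A.imp B.neg).neg
def Formula.or (A B : Formula) : Formula := A.neg.imp B
def Formula.top : Formula := Formula.bot.imp .bot

/-- Formulas built from atoms, ⊥, →, □, ■ only (no diamonds). -/
def Formula.NoDia : Formula → Prop
  | .atom _ => True
  | .bot => True
  | .imp A B => A.NoDia ∧ B.NoDia
  | .box A => A.NoDia
  | .dia _ => False
  | .bbox A => A.NoDia
  | .bdia _ => False

/-- Structural connectives: `up` is ↗ and `dn` is ↙. -/
inductive Dir : Type
  | up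
  | dn

/-- Linear nested sequents: a nonempty list of components `Γ ⇒ Δ`
joined by the structural connectives ↗ (`up`) and ↙ (`dn`). -/
inductive LNS : Type
  | single (Γ Δ : Multiset Formula) : LNS
  | up (Γ Δ : Multiset Formula) (S : LNS) : LNS
  | dn (Γ Δ : Multiset Formula) (S : LNS) : LNS

/-- A (possibly empty) context: a list of components, each together with the
structural connective joining it to what follows. -/
abbrev Ctx := List (Multiset Formula × Multiset Formula × Dir)

/-- `plug G S` is the linear nested sequent `G ⇗ S` (just `S` when `G` is empty). -/
def plug : Ctx → LNS → LNS
  | [], S => S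
  | (Γ, Δ, Dir.up) :: G, S => LNS.up Γ Δ (plug G S)
  | (Γ, Δ, Dir.dn) :: G, S => LNS.dn Γ Δ (plug G S)

/-- The structural connective joining the context to what follows it (none if empty). -/
def lastDir : Ctx → Option Dir
  | [] => none
  | [(_, _, d)] => some d
  | _ :: G => lastDir G

/-- Kripke forcing for tense logic. -/
def Force {W : Type} (R : W → W → Prop) (V : W → ℕ → Prop) : W → Formula → Prop
  | w, .atom p => V w p
  | _, .bot => False
  | w, .imp A B => Force R V w A → Force R V w B
  | w, .box A => ∀ v, R w v → Force R V v A
  | w, .dia A => ∃ v, R w v ∧ Force R V v A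
  | w, .bbox A => ∀ v, R v w → Force R V v A
  | w, .bdia A => ∃ v, R v w ∧ Force R V v A

/-- Conjunction of a finite multiset of formulae (empty conjunction is ⊤). -/
noncomputable def bigAnd (Γ : Multiset Formula) : Formula :=
  Γ.toList.foldr Formula.and Formula.top

/-- Disjunction of a finite multiset of formulae (empty disjunction is ⊥). -/
noncomputable def bigOr (Δ : Multiset Formula) : Formula :=
  Δ.toList.foldr Formula.or Formula.bot

/-- The formula translation τ of a linear nested sequent. -/
noncomputable def tau : LNS → Formula
  | .single Γ Δ => (bigAnd Γ).imp (bigOr Δ)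
  | .up Γ Δ S => (bigAnd Γ).imp ((bigOr Δ).or (tau S).box)
  | .dn Γ Δ S => (bigAnd Γ).imp ((bigOr Δ).or (tau S).bbox)

/-- A formula is valid if it is forced at every world of every Kripke model. -/
def Valid (A : Formula) : Prop :=
  ∀ (W : Type) (_ : Nonempty W) (R : W → W → Prop) (V : W → ℕ → Prop) (w : W),
    Force R V w A

/-- A linear nested sequent is falsifiable if its formula translation fails at
some world of some Kripke model. -/
def Falsifiable (S : LNS) : Prop :=
  ∃ (W : Type) (_ : Nonempty W) (R : W → W → Prop) (V : W → ℕ → Prop) (w : W),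
    ¬ Force R V w (tau S)

lemma force_and {W : Type} {R : W → W → Prop} {V : W → ℕ → Prop} {w : W} {A B : Formula} :
    Force R V w (A.and B) ↔ Force R V w A ∧ Force R V w B := by
  simp only [Formula.and, Formula.neg, Force]; tauto

lemma force_or {W : Type} {R : W → W → Prop} {V : W → ℕ → Prop} {w : W} {A B : Formula} :
    Force R V w (A.or B) ↔ Force R V w A ∨ Force R V w B := by
  simp only [Formula.or, Formula.neg, Force]; tauto

lemma force_bigAnd_list {W : Type} {R : W → W → Prop} {V : W → ℕ → Prop} {w : W}
    (l : List Formula) :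
    Force R V w (l.foldr Formula.and Formula.top) ↔ ∀ B ∈ l, Force R V w B := by
  induction l with
  | nil => simp [Formula.top, Force]
  | cons a l ih => simp [force_and, ih]

lemma force_bigAnd {W : Type} {R : W → W → Prop} {V : W → ℕ → Prop} {w : W}
    (Γ : Multiset Formula) :
    Force R V w (bigAnd Γ) ↔ ∀ B ∈ Γ, Force R V w B := by
  rw [bigAnd, force_bigAnd_list]
  constructor
  · intro h B hB; exact h B (by simpa using hB)
  · intro h B hB; exact h B (by simpa using hB)

/-- Failing the conclusion's inner part at `v` implies failing the premiss's at `v`. -/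
lemma step {W : Type} {R : W → W → Prop} {V : W → ℕ → Prop} {v : W}
    {Γ Δ Θ Λ : Multiset Formula} {A : Formula}
    (h : ¬ Force R V v (tau (.up Γ Δ (.single (A.bbox ::ₘ Θ) Λ)))) :
    ¬ Force R V v (tau (.single (A ::ₘ Γ) Δ)) := by
  simp only [tau, Formula.or, Formula.neg, Force, not_forall, _root_.not_imp] at h ⊢
  obtain ⟨hΓ, hΔ, u, hRu, hΘ, _⟩ := h
  rw [force_bigAnd] at hΘ
  have hA : Force R V v A := (hΘ A.bbox (by simp)) v hRu
  refine ⟨?_, hΔ⟩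
  rw [force_bigAnd] at hΓ ⊢
  intro B hB
  rcases Multiset.mem_cons.mp hB with h | h
  · exact h ▸ hA
  · exact hΓ B h

lemma plug_mono {W : Type} {R : W → W → Prop} {V : W → ℕ → Prop}
    {S S' : LNS}
    (hstep : ∀ v : W, ¬ Force R V v (tau S) → ¬ Force R V v (tau S'))
    (G : Ctx) :
    ∀ w : W, ¬ Force R V w (tau (plug G S)) → ¬ Force R V w (tau (plug G S')) := by
  induction G with
  | nil => exact hstep
  | cons c G ih =>
    obtain ⟨Γc, Δc, d⟩ := c
    cases d <;>
    · intro w h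
      simp only [plug, tau, Formula.or, Formula.neg, Force, not_forall, _root_.not_imp] at h ⊢
      obtain ⟨hΓ, hΔ, u, hRu, hu⟩ := h
      exact ⟨hΓ, hΔ, u, hRu, ih u hu⟩

/-- Soundness of the restart rule (■_L^2): if the conclusion
`G ⇗ Γ ⇒ Δ ↗ Θ,■A ⇒ Λ` is falsifiable, then the premiss `G ⇗ Γ,A ⇒ Δ`
is falsifiable. -/
theorem bboxL2_sound (G : Ctx) (Γ Δ Θ Λ : Multiset Formula) (A : Formula)
    (h : Falsifiable (plug G (.up Γ Δ (.single (A.bbox ::ₘ Θ) Λ)))) :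
    Falsifiable (plug G (.single (A ::ₘ Γ) Δ)) := by
  obtain ⟨W, hW, R, V, w, hw⟩ := h
  exact ⟨W, hW, R, V, w, plug_mono (fun v => step) G w hw⟩
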